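/- Let V = ℝ^{1,10} with mostly-minus metric η and let F ∈ Λ⁴V be a 4-vector satisfying η(ι_Z F, ι_W F) = 0 for all Z, W ∈ V (i.e. the symmetric 2-tensor F²_{ab} = (1/6)F_{amnp}F_b{}^{mnp} vanishes identically). Then F = 0. -/

import Mathlib

private lemma triple_sum_zero {g : Fin 11 → Fin 11 → Fin 11 → ℝ}
    (hle : ∀ i j k, g i j k ≤ 0)
    (hsum : ∑ i : Fin 11, ∑ j : Fin 11, ∑ k : Fin 11, g i j k = 0) :
    ∀ i j k, g i j k = 0 := by
  have h1 : ∀ i ∈ Finset.univ, ∑ j : Fin 11, ∑ k : Fin 11, g i j k = 0 :=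
    (Finset.sum_eq_zero_iff_of_nonpos (fun i _ =>
      Finset.sum_nonpos fun j _ => Finset.sum_nonpos fun k _ => hle i j k)).mp hsum
  intro i j k
  have h2 : ∀ j ∈ Finset.univ, ∑ k : Fin 11, g i j k = 0 :=
    (Finset.sum_eq_zero_iff_of_nonpos (fun j _ =>
      Finset.sum_nonpos fun k _ => hle i j k)).mp (h1 i (Finset.mem_univ i))
  exact (Finset.sum_eq_zero_iff_of_nonpos (fun k _ => hle i j k)).mp
    (h2 j (Finset.mem_univ j)) k (Finset.mem_univ k)

theorem four_form_square_zero
    {V : Type*} [AddCommGroup V] [Module ℝ V]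
    (η : LinearMap.BilinForm ℝ V)
    (hηsymm : ∀ v w : V, η v w = η w v)
    (b : Module.Basis (Fin 11) ℝ V)
    (hb : ∀ i j : Fin 11,
      η (b i) (b j) = if i = j then (if i = (0 : Fin 11) then (1 : ℝ) else -1) else 0)
    (F : AlternatingMap ℝ V ℝ (Fin 4))
    (hF : ∀ Z W : V,
      ∑ i : Fin 11, ∑ j : Fin 11, ∑ k : Fin 11,
        (if i = (0 : Fin 11) then (1 : ℝ) else -1) *
        (if j = (0 : Fin 11) then (1 : ℝ) else -1) *
        (if k = (0 : Fin 11) then (1 : ℝ) else -1) *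
        (F ![Z, b i, b j, b k] * F ![W, b i, b j, b k]) = 0) :
    F = 0 := by
  classical
  -- swap lemmas
  have swap1 : ∀ x y z w : V, F ![y, x, z, w] = - F ![x, y, z, w] := by
    intro x y z w
    have h := F.map_swap ![x, y, z, w] (show (0 : Fin 4) ≠ 1 by decide)
    have he : (![x, y, z, w] ∘ Equiv.swap (0 : Fin 4) 1) = ![y, x, z, w] := by
      funext m; fin_cases m <;> simp [Equiv.swap_apply_def] <;> rfl
    rw [he] at h; exact h
  have swap2 : ∀ x y z w : V, F ![z, y, x, w] = - F ![x, y, z, w] := by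
    intro x y z w
    have h := F.map_swap ![x, y, z, w] (show (0 : Fin 4) ≠ 2 by decide)
    have he : (![x, y, z, w] ∘ Equiv.swap (0 : Fin 4) 2) = ![z, y, x, w] := by
      funext m; fin_cases m <;> simp [Equiv.swap_apply_def] <;> rfl
    rw [he] at h; exact h
  have swap3 : ∀ x y z w : V, F ![w, y, z, x] = - F ![x, y, z, w] := by
    intro x y z w
    have h := F.map_swap ![x, y, z, w] (show (0 : Fin 4) ≠ 3 by decide)
    have he : (![x, y, z, w] ∘ Equiv.swap (0 : Fin 4) 3) = ![w, y, z, x] := by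
      funext m; fin_cases m <;> simp [Equiv.swap_apply_def] <;> rfl
    rw [he] at h; exact h
  have rep1 : ∀ x z w : V, F ![x, x, z, w] = 0 := fun x z w =>
    F.map_eq_zero_of_eq _ (show (![x, x, z, w] : Fin 4 → V) 0 = ![x, x, z, w] 1 from rfl)
      (by decide)
  have rep2 : ∀ x z w : V, F ![x, z, x, w] = 0 := fun x z w =>
    F.map_eq_zero_of_eq _ (show (![x, z, x, w] : Fin 4 → V) 0 = ![x, z, x, w] 2 from rfl)
      (by decide)
  have rep3 : ∀ x z w : V, F ![x, z, w, x] = 0 := fun x z w =>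
    F.map_eq_zero_of_eq _ (show (![x, z, w, x] : Fin 4 → V) 0 = ![x, z, w, x] 3 from rfl)
      (by decide)
  -- Step 1: components with a `0` in the first slot vanish
  have h0 : ∀ i j k : Fin 11, F ![b 0, b i, b j, b k] = 0 := by
    have key := triple_sum_zero (g := fun i j k =>
        (if i = (0 : Fin 11) then (1 : ℝ) else -1) *
        (if j = (0 : Fin 11) then (1 : ℝ) else -1) *
        (if k = (0 : Fin 11) then (1 : ℝ) else -1) *
        (F ![b 0, b i, b j, b k] * F ![b 0, b i, b j, b k]))
      (by
        intro i j k
        by_cases hi : i = 0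
        · subst hi; rw [rep1]; simp
        by_cases hj : j = 0
        · subst hj; rw [rep2]; simp
        by_cases hk : k = 0
        · subst hk; rw [rep3]; simp
        simp only [hi, hj, hk, if_false]
        nlinarith [mul_self_nonneg (F ![b 0, b i, b j, b k])])
      (hF (b 0) (b 0))
    intro i j k
    by_cases hi : i = 0
    · subst hi; exact rep1 _ _ _
    by_cases hj : j = 0
    · subst hj; exact rep2 _ _ _
    by_cases hk : k = 0
    · subst hk; exact rep3 _ _ _
    have := key i j k
    simp only [hi, hj, hk, if_false] at this
    nlinarith [this]
  -- Step 2: all components vanish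
  have hall : ∀ a i j k : Fin 11, F ![b a, b i, b j, b k] = 0 := by
    intro a i j k
    by_cases ha : a = 0
    · subst ha; exact h0 i j k
    by_cases hi : i = 0
    · subst hi; rw [swap1]; rw [h0]; ring
    by_cases hj : j = 0
    · subst hj; rw [swap2]; rw [h0]; ring
    by_cases hk : k = 0
    · subst hk; rw [swap3]; rw [h0]; ring
    have key := triple_sum_zero (g := fun i j k =>
        (if i = (0 : Fin 11) then (1 : ℝ) else -1) *
        (if j = (0 : Fin 11) then (1 : ℝ) else -1) *
        (if k = (0 : Fin 11) then (1 : ℝ) else -1) *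
        (F ![b a, b i, b j, b k] * F ![b a, b i, b j, b k]))
      (by
        intro i j k
        by_cases hi' : i = 0
        · subst hi'
          have : F ![b a, b 0, b j, b k] = 0 := by rw [swap1, h0]; ring
          rw [this]; simp
        by_cases hj' : j = 0
        · subst hj'
          have : F ![b a, b i, b 0, b k] = 0 := by rw [swap2, h0]; ring
          rw [this]; simp
        by_cases hk' : k = 0
        · subst hk'
          have : F ![b a, b i, b j, b 0] = 0 := by rw [swap3, h0]; ring
          rw [this]; simp
        simp only [hi', hj', hk', if_false]
        nlinarith [mul_self_nonneg (F ![b a, b i, b j, b k])])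
      (hF (b a) (b a))
    have := key i j k
    simp only [hi, hj, hk, if_false] at this
    nlinarith [this]
  -- conclude
  refine b.ext_alternating fun v _ => ?_
  have : (fun i => b (v i)) = ![b (v 0), b (v 1), b (v 2), b (v 3)] := by
    funext m; fin_cases m <;> rfl
  rw [this, hall]
  rfl
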